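/- arXiv:2212.13548 — 6 statements merged into one kernel-verified Lean document; each statement's English description precedes it below -/
import Mathlib

section
/- Let A, B, C be positive semidefinite n×n Hermitian matrices. Then rank(A+B+C) + rank(C) ≤ rank(A+C) + rank(B+C). -/
open Matrix
open scoped ComplexOrder

lemma psd_ker_add (n : ℕ) (A B : Matrix (Fin n) (Fin n) ℂ)
    (hA : A.PosSemidef) (hB : B.PosSemidef) :
    LinearMap.ker (A + B).mulVecLin = LinearMap.ker A.mulVecLin ⊓ LinearMap.ker B.mulVecLin := by
  ext x
  simp only [LinearMap.mem_ker, Submodule.mem_inf, mulVecLin_apply, add_mulVec]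
  constructor
  · intro h
    have h0 : star x ⬝ᵥ (A *ᵥ x) + star x ⬝ᵥ (B *ᵥ x) = 0 := by
      rw [← dotProduct_add, h, dotProduct_zero]
    have hA0 := hA.dotProduct_mulVec_nonneg x
    have hB0 := hB.dotProduct_mulVec_nonneg x
    have h1 : star x ⬝ᵥ (A *ᵥ x) = 0 := le_antisymm (by
      have : star x ⬝ᵥ (A *ᵥ x) = - (star x ⬝ᵥ (B *ᵥ x)) := by linear_combination h0
      rw [this]; exact neg_nonpos.mpr hB0) hA0
    have h2 : star x ⬝ᵥ (B *ᵥ x) = 0 := by linear_combination h0 - h1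
    exact ⟨(hA.dotProduct_mulVec_zero_iff x).mp h1, (hB.dotProduct_mulVec_zero_iff x).mp h2⟩
  · rintro ⟨h1, h2⟩; rw [h1, h2, add_zero]

/-- Submodularity of the rank of sums of positive semidefinite Hermitian
matrices: `rank (A + B + C) + rank C ≤ rank (A + C) + rank (B + C)`. -/
theorem psd_rank_submodular
    (n : ℕ) (A B C : Matrix (Fin n) (Fin n) ℂ)
    (hA : A.PosSemidef) (hB : B.PosSemidef) (hC : C.PosSemidef) :
    (A + B + C).rank + C.rank ≤ (A + C).rank + (B + C).rank := by
  set kA := LinearMap.ker A.mulVecLin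
  set kB := LinearMap.ker B.mulVecLin
  set kC := LinearMap.ker C.mulVecLin
  have hABC : LinearMap.ker (A + B + C).mulVecLin = kA ⊓ kB ⊓ kC := by
    rw [psd_ker_add n (A + B) C (hA.add hB) hC, psd_ker_add n A B hA hB]
  have hAC : LinearMap.ker (A + C).mulVecLin = kA ⊓ kC := psd_ker_add n A C hA hC
  have hBC : LinearMap.ker (B + C).mulVecLin = kB ⊓ kC := psd_ker_add n B C hB hC
  -- rank-nullity for each matrix
  have rn : ∀ M : Matrix (Fin n) (Fin n) ℂ,
      M.rank + Module.finrank ℂ (LinearMap.ker M.mulVecLin) = n := by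
    intro M
    have := LinearMap.finrank_range_add_finrank_ker M.mulVecLin
    simpa [Matrix.rank] using this
  have h1 := rn (A + B + C)
  have h2 : C.rank + Module.finrank ℂ ↥kC = n := rn C
  have h3 := rn (A + C)
  have h4 := rn (B + C)
  rw [hABC] at h1
  rw [hAC] at h3
  rw [hBC] at h4
  -- dimension formula
  have key : Module.finrank ℂ ↥(kA ⊓ kC) + Module.finrank ℂ ↥(kB ⊓ kC)
      ≤ Module.finrank ℂ ↥(kA ⊓ kB ⊓ kC) + Module.finrank ℂ ↥kC := by
    have hsup : Module.finrank ℂ ↥((kA ⊓ kC) ⊔ (kB ⊓ kC))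
        + Module.finrank ℂ ↥((kA ⊓ kC) ⊓ (kB ⊓ kC))
        = Module.finrank ℂ ↥(kA ⊓ kC) + Module.finrank ℂ ↥(kB ⊓ kC) :=
      Submodule.finrank_sup_add_finrank_inf_eq _ _
    have hinter : (kA ⊓ kC) ⊓ (kB ⊓ kC) = kA ⊓ kB ⊓ kC := by
      rw [inf_assoc, inf_comm kC, inf_assoc, inf_idem, ← inf_assoc]
    rw [hinter] at hsup
    have hle : (kA ⊓ kC) ⊔ (kB ⊓ kC) ≤ kC := sup_le inf_le_right inf_le_right
    have := Submodule.finrank_mono hle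
    omega
  omega
end

section
/- Let A, B, C be positive semidefinite n×n Hermitian matrices. Then (1/2)(rank(A+C) + rank(B+C)) ≤ rank(A+B+C) + rank(C) ≤ rank(A+C) + rank(B+C). -/
open Matrix
open scoped ComplexOrder

lemma rank_eq_card_sub_ker (n : ℕ) (M : Matrix (Fin n) (Fin n) ℂ) :
    M.rank = n - Module.finrank ℂ (LinearMap.ker M.mulVecLin) := by
  have := LinearMap.finrank_range_add_finrank_ker M.mulVecLin
  rw [Module.finrank_pi, Fintype.card_fin] at this
  rw [Matrix.rank]
  omega

/-- For positive semidefinite Hermitian matrices `A`, `B`, `C`: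
`(1/2)(rank (A+C) + rank (B+C)) ≤ rank (A+B+C) + rank C ≤ rank (A+C) + rank (B+C)`. -/
theorem psd_rank_two_sided_estimate
    (n : ℕ) (A B C : Matrix (Fin n) (Fin n) ℂ)
    (hA : A.PosSemidef) (hB : B.PosSemidef) (hC : C.PosSemidef) :
    ((A + C).rank + (B + C).rank : ℚ) / 2 ≤ ((A + B + C).rank + C.rank : ℚ) ∧
    (A + B + C).rank + C.rank ≤ (A + C).rank + (B + C).rank := by
  set kA := LinearMap.ker A.mulVecLin
  set kB := LinearMap.ker B.mulVecLin
  set kC := LinearMap.ker C.mulVecLin with hkC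
  have hAC : LinearMap.ker (A + C).mulVecLin = kA ⊓ kC := psd_ker_add n A C hA hC
  have hBC : LinearMap.ker (B + C).mulVecLin = kB ⊓ kC := psd_ker_add n B C hB hC
  have hABC : LinearMap.ker (A + B + C).mulVecLin = kA ⊓ kB ⊓ kC := by
    rw [psd_ker_add n (A + B) C (hA.add hB) hC, psd_ker_add n A B hA hB]
  have fle : ∀ (U : Submodule ℂ (Fin n → ℂ)), Module.finrank ℂ U ≤ n := fun U => by
    simpa [Module.finrank_pi] using Submodule.finrank_le U
  have key : Module.finrank ℂ (kA ⊓ kC : Submodule ℂ _) +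
      Module.finrank ℂ (kB ⊓ kC : Submodule ℂ _) ≤
      Module.finrank ℂ (kA ⊓ kB ⊓ kC : Submodule ℂ _) + Module.finrank ℂ kC := by
    have h1 := Submodule.finrank_sup_add_finrank_inf_eq (kA ⊓ kC) (kB ⊓ kC)
    have h2 : (kA ⊓ kC) ⊓ (kB ⊓ kC) = kA ⊓ kB ⊓ kC := by
      rw [inf_assoc, inf_comm kC, inf_assoc, inf_idem, ← inf_assoc]
    have h3 : (kA ⊓ kC) ⊔ (kB ⊓ kC) ≤ kC := sup_le inf_le_right inf_le_right
    have h4 := Submodule.finrank_mono h3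
    rw [h2] at h1
    omega
  rw [rank_eq_card_sub_ker n (A + C), hAC]
  rw [rank_eq_card_sub_ker n (B + C), hBC]
  rw [rank_eq_card_sub_ker n (A + B + C), hABC]
  rw [rank_eq_card_sub_ker n C, ← hkC]
  have hmono1 : Module.finrank ℂ (kA ⊓ kB ⊓ kC : Submodule ℂ _) ≤
      Module.finrank ℂ (kA ⊓ kC : Submodule ℂ _) :=
    Submodule.finrank_mono (inf_le_inf_right kC inf_le_left)
  have hmono2 : Module.finrank ℂ (kA ⊓ kB ⊓ kC : Submodule ℂ _) ≤
      Module.finrank ℂ (kB ⊓ kC : Submodule ℂ _) :=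
    Submodule.finrank_mono (inf_le_inf_right kC inf_le_right)
  have n1 := fle (kA ⊓ kC)
  have n2 := fle (kB ⊓ kC)
  have n3 := fle (kA ⊓ kB ⊓ kC)
  have n4 := fle kC
  constructor
  · rw [div_le_iff₀ (by norm_num : (0:ℚ) < 2)]
    have e1 : ((n - Module.finrank ℂ (kA ⊓ kC : Submodule ℂ _) : ℕ) : ℚ) ≤
        ((n - Module.finrank ℂ (kA ⊓ kB ⊓ kC : Submodule ℂ _) : ℕ) : ℚ) := by
      exact_mod_cast Nat.sub_le_sub_left hmono1 n
    have e2 : ((n - Module.finrank ℂ (kB ⊓ kC : Submodule ℂ _) : ℕ) : ℚ) ≤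
        ((n - Module.finrank ℂ (kA ⊓ kB ⊓ kC : Submodule ℂ _) : ℕ) : ℚ) := by
      exact_mod_cast Nat.sub_le_sub_left hmono2 n
    have e3 : (0:ℚ) ≤ ((n - Module.finrank ℂ kC : ℕ) : ℚ) := by positivity
    ring_nf
    linarith
  · omega
end

section
/- Let α₁, ..., αₙ be positive semidefinite n×n Hermitian matrices such that for every subset I ⊆ [n], rank(∑_{i∈I} α_i) ≥ |I|. Then the mixed discriminant D(α₁,...,αₙ) > 0. -/
open Matrix
open scoped ComplexOrder

/-- The mixed discriminant of `n` matrices `A₁, ..., Aₙ`: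
`D(A₁,...,Aₙ) = (1/n!) ∑_{σ ∈ Sₙ} det M_σ`, where the `j`-th column of `M_σ`
is the `j`-th column of `A_{σ(j)}`.  This equals
`(1/n!) ∂ⁿ/∂t₁⋯∂tₙ det (t₁A₁ + ⋯ + tₙAₙ)`. -/
noncomputable def mixedDiscriminant (n : ℕ) (A : Fin n → Matrix (Fin n) (Fin n) ℂ) : ℂ :=
  (n.factorial : ℂ)⁻¹ * ∑ σ : Equiv.Perm (Fin n), (Matrix.of fun i j => A (σ j) i j).det

section Rado


open Submodule Module Set

variable {K V ι κ : Type*} [Field K] [AddCommGroup V] [Module K V]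
    [FiniteDimensional K V] [DecidableEq ι] [Nonempty κ]

lemma finrank_sup_span_singleton {Y : Submodule K V} {v : V} (hv : v ∉ Y) (hv0 : v ≠ 0) :
    finrank K (Y ⊔ span K {v} : Submodule K V) = finrank K Y + 1 := by
  have hdisj : Disjoint Y (span K {v}) := (disjoint_span_singleton' hv0).2 hv
  have := Submodule.finrank_sup_add_finrank_inf_eq Y (span K {v})
  rw [hdisj.eq_bot, finrank_bot, finrank_span_singleton hv0] at this
  omega

lemma rado_aux (c : ι → κ → V) (S : Finset ι) :
    ∀ U : Submodule K V,
      (∀ I ⊆ S, I.card + finrank K U ≤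
        finrank K (U ⊔ ⨆ i ∈ I, span K (Set.range (c i)) : Submodule K V)) →
      ∃ k : ι → κ, ∀ g : ι → K,
        (∑ i ∈ S, g i • c i (k i)) ∈ U → ∀ i ∈ S, g i = 0 := by
  induction S using Finset.induction_on with
  | empty =>
    intro U _
    exact ⟨fun _ => Classical.arbitrary κ, by simp⟩
  | @insert a S' ha ih =>
    intro U hU
    set W : ι → Submodule K V := fun i => span K (Set.range (c i)) with hW
    classical
    replace hU : ∀ I ⊆ insert a S', I.card + finrank K U ≤
        finrank K (U ⊔ ⨆ i ∈ I, W i : Submodule K V) := hU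
    set Tight : Finset ι → Prop :=
      fun I => finrank K (U ⊔ ⨆ i ∈ I, W i : Submodule K V) = I.card + finrank K U with hTight
    have hsupIJ : ∀ I J : Finset ι,
        (U ⊔ ⨆ i ∈ (I ∪ J), W i : Submodule K V)
          = (U ⊔ ⨆ i ∈ I, W i) ⊔ (U ⊔ ⨆ i ∈ J, W i) := by
      intro I J
      rw [Finset.iSup_union, sup_sup_sup_comm, sup_idem]
    have htight_union : ∀ I J : Finset ι, I ⊆ S' → J ⊆ S' → Tight I → Tight J →
        Tight (I ∪ J) := by
      intro I J hIS hJS hI hJ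
      have hmod := Submodule.finrank_sup_add_finrank_inf_eq
        (U ⊔ ⨆ i ∈ I, W i) (U ⊔ ⨆ i ∈ J, W i)
      have hinter : (U ⊔ ⨆ i ∈ (I ∩ J), W i : Submodule K V)
          ≤ (U ⊔ ⨆ i ∈ I, W i) ⊓ (U ⊔ ⨆ i ∈ J, W i) := by
        refine le_inf ?_ ?_ <;>
          exact sup_le_sup le_rfl (biSup_mono (by intro x hx; simp_all [Finset.mem_inter]))
      have hinterrank : (I ∩ J).card + finrank K U ≤
          finrank K ((U ⊔ ⨆ i ∈ I, W i) ⊓ (U ⊔ ⨆ i ∈ J, W i) : Submodule K V) := by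
        refine le_trans (hU _ ?_) (Submodule.finrank_mono hinter)
        exact le_trans (Finset.inter_subset_left.trans hIS) (Finset.subset_insert a S')
      have hge := hU (I ∪ J) (by
        intro x hx
        rcases Finset.mem_union.1 hx with h | h
        · exact Finset.subset_insert a S' (hIS h)
        · exact Finset.subset_insert a S' (hJS h))
      have hle : finrank K (U ⊔ ⨆ i ∈ (I ∪ J), W i : Submodule K V)
          ≤ (I ∪ J).card + finrank K U := by
        rw [hsupIJ]
        have hcard : (I ∪ J).card + (I ∩ J).card = I.card + J.card :=
          Finset.card_union_add_card_inter I J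
        omega
      exact le_antisymm hle hge
    -- the union of all tight subsets of S'
    set T : Finset ι := (S'.powerset.filter Tight).sup id with hT
    have hTprop : T ⊆ S' ∧ Tight T := by
      rw [hT]
      refine Finset.sup_induction (p := fun I => I ⊆ S' ∧ Tight I) ?_ ?_ ?_
      · refine ⟨Finset.empty_subset _, ?_⟩
        show finrank K ↥(U ⊔ ⨆ i ∈ (⊥ : Finset ι), W i) = (⊥ : Finset ι).card + finrank K ↥U
        rw [show (⨆ i ∈ (⊥ : Finset ι), W i : Submodule K V) = ⊥ by simp, sup_bot_eq]
        simp
      · intro I hI J hJ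
        exact ⟨Finset.union_subset hI.1 hJ.1, htight_union I J hI.1 hJ.1 hI.2 hJ.2⟩
      · intro I hI
        simp only [Finset.mem_filter, Finset.mem_powerset] at hI
        exact ⟨hI.1, hI.2⟩
    obtain ⟨hTS, hTtight⟩ := hTprop
    have haT : a ∉ T := fun h => ha (hTS h)
    set X : Submodule K V := U ⊔ ⨆ i ∈ T, W i with hX
    -- W a is not contained in X
    have hWa : ¬ W a ≤ X := by
      intro hle
      have h1 := hU (insert a T) (Finset.insert_subset_insert a hTS)
      rw [Finset.card_insert_of_notMem haT] at h1
      have h2 : (U ⊔ ⨆ i ∈ insert a T, W i : Submodule K V) = X := by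
        rw [Finset.iSup_insert,
          show U ⊔ (W a ⊔ ⨆ i ∈ T, W i) = (U ⊔ ⨆ i ∈ T, W i) ⊔ W a by
            rw [sup_comm (W a), ← sup_assoc]]
        exact sup_eq_left.2 hle
      rw [h2] at h1
      have : finrank K X = T.card + finrank K U := hTtight
      omega
    obtain ⟨ka, hka⟩ : ∃ kk : κ, c a kk ∉ X := by
      by_contra hcon
      push_neg at hcon
      exact hWa (span_le.2 (by rintro x ⟨kk, rfl⟩; exact hcon kk))
    set v : V := c a ka with hv
    have hvU : v ∉ U := fun h => hka ((le_sup_left : U ≤ X) h)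
    have hv0 : v ≠ 0 := fun h => hka (h ▸ X.zero_mem)
    set U' : Submodule K V := U ⊔ span K {v} with hU'def
    have frU' : finrank K U' = finrank K U + 1 := finrank_sup_span_singleton hvU hv0
    have hU' : ∀ I ⊆ S', I.card + finrank K U' ≤
        finrank K (U' ⊔ ⨆ i ∈ I, W i : Submodule K V) := by
      intro I hIS'
      have hY : (U' ⊔ ⨆ i ∈ I, W i : Submodule K V)
          = (U ⊔ ⨆ i ∈ I, W i) ⊔ span K {v} := sup_right_comm U (span K {v}) _
      have h1 := hU I (hIS'.trans (Finset.subset_insert a S'))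
      by_cases htI : Tight I
      · have hIT : I ⊆ T :=
          Finset.le_sup (f := id) (Finset.mem_filter.2 ⟨Finset.mem_powerset.2 hIS', htI⟩)
        have hYX : (U ⊔ ⨆ i ∈ I, W i : Submodule K V) ≤ X :=
          sup_le_sup le_rfl (biSup_mono fun i hi => hIT hi)
        have hvY : v ∉ (U ⊔ ⨆ i ∈ I, W i : Submodule K V) := fun h => hka (hYX h)
        rw [hY, finrank_sup_span_singleton hvY hv0, frU']
        omega
      · have h2 : finrank K (U ⊔ ⨆ i ∈ I, W i : Submodule K V) ≠ I.card + finrank K U := htI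
        have h3 : finrank K (U ⊔ ⨆ i ∈ I, W i : Submodule K V)
            ≤ finrank K ((U ⊔ ⨆ i ∈ I, W i) ⊔ span K {v} : Submodule K V) :=
          Submodule.finrank_mono le_sup_left
        rw [hY, frU']
        omega
    obtain ⟨k', hk'⟩ := ih U' hU'
    refine ⟨Function.update k' a ka, ?_⟩
    intro g hg i hi
    set k := Function.update k' a ka with hk
    have hka' : k a = ka := Function.update_self a ka k'
    rw [Finset.sum_insert ha] at hg
    have hsum : ∑ j ∈ S', g j • c j (k j) = ∑ j ∈ S', g j • c j (k' j) :=
      Finset.sum_congr rfl fun j hj => by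
        rw [hk, Function.update_of_ne (fun (h : j = a) => ha (h ▸ hj))]
    have hmem : ∑ j ∈ S', g j • c j (k' j) ∈ U' := by
      rw [← hsum]
      have heq : ∑ j ∈ S', g j • c j (k j)
          = (g a • c a (k a) + ∑ j ∈ S', g j • c j (k j)) - g a • v := by
        rw [hka']; abel
      rw [heq]
      exact sub_mem ((le_sup_left : U ≤ U') hg)
        ((le_sup_right : span K {v} ≤ U')
          (Submodule.smul_mem _ _ (subset_span (Set.mem_singleton v))))
    have hz' : ∀ j ∈ S', g j = 0 := hk' g hmem
    have hsum0 : ∑ j ∈ S', g j • c j (k j) = 0 :=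
      Finset.sum_eq_zero fun j hj => by rw [hz' j hj, zero_smul]
    have hgav : g a • v ∈ U := by
      rw [hsum0, add_zero, hka'] at hg
      exact hg
    have hga : g a = 0 := by
      by_contra hne
      exact hvU ((Submodule.smul_mem_iff _ hne).1 hgav)
    rcases Finset.mem_insert.1 hi with rfl | hi'
    · exact hga
    · exact hz' i hi'

end Rado

section Matrices
open Matrix
open scoped ComplexOrder

variable {n : ℕ}

lemma update_col_eq (A : Fin n → Matrix (Fin n) (Fin n) ℂ) (σ : Equiv.Perm (Fin n))
    (p : Fin n) (x : Matrix (Fin n) (Fin n) ℂ) :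
    (Matrix.of fun i j => (Function.update A p x) (σ j) i j)
      = Matrix.updateCol (Matrix.of fun i j => A (σ j) i j) (σ⁻¹ p)
          (fun i => x i (σ⁻¹ p)) := by
  ext i j
  by_cases h : j = σ⁻¹ p
  · subst h
    simp [Function.update, updateCol_apply]
  · have h' : σ j ≠ p := fun hc => h (by simp [← hc])
    simp [Function.update, updateCol_apply, show ¬ j = σ.symm p from h, h']

noncomputable def detAux (n : ℕ) (σ : Equiv.Perm (Fin n)) :
    MultilinearMap ℂ (fun _ : Fin n => Matrix (Fin n) (Fin n) ℂ) ℂ where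
  toFun A := (Matrix.of fun i j => A (σ j) i j).det
  map_update_add' := by
    intro inst A p x y
    rw [Subsingleton.elim inst (instDecidableEqFin n)]; clear inst
    simp only [update_col_eq]
    have hxy : (fun i => (x + y) i (σ⁻¹ p))
        = (fun i => x i (σ⁻¹ p)) + (fun i => y i (σ⁻¹ p)) := rfl
    rw [hxy, det_updateCol_add]
  map_update_smul' := by
    intro inst A p r x
    rw [Subsingleton.elim inst (instDecidableEqFin n)]; clear inst
    simp only [update_col_eq]
    have hx : (fun i => (r • x) i (σ⁻¹ p)) = r • (fun i => x i (σ⁻¹ p)) := rfl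
    rw [hx, det_updateCol_smul, smul_eq_mul]

lemma detAux_rankOne (σ : Equiv.Perm (Fin n)) (v : Fin n → (Fin n → ℂ)) :
    detAux n σ (fun i => vecMulVec (v i) (star (v i)))
      = ((Equiv.Perm.sign σ : ℤ) : ℂ) * (∏ j, star (v (σ j) j))
          * (Matrix.of fun r i => v i r).det := by
  have e1 : (Matrix.of fun i j => (fun i => vecMulVec (v i) (star (v i))) (σ j) i j)
      = Matrix.of fun i j =>
          (fun j' => star (v (σ j') j')) j * ((Matrix.of fun r i => v i r).submatrix id σ) i j := by
    ext i j
    simp [vecMulVec_apply, mul_comm]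
  show (Matrix.of fun i j => (fun i => vecMulVec (v i) (star (v i))) (σ j) i j).det = _
  rw [e1, det_mul_row, det_permute']
  ring

lemma sum_detAux_rankOne (v : Fin n → (Fin n → ℂ)) :
    ∑ σ : Equiv.Perm (Fin n), detAux n σ (fun i => vecMulVec (v i) (star (v i)))
      = (Matrix.of fun r i => v i r).det * star (Matrix.of fun r i => v i r).det := by
  simp only [detAux_rankOne]
  rw [show ∑ σ : Equiv.Perm (Fin n), ((Equiv.Perm.sign σ : ℤ) : ℂ) * (∏ j, star (v (σ j) j))
        * (Matrix.of fun r i => v i r).det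
      = (Matrix.of fun r i => v i r).det *
        ∑ σ : Equiv.Perm (Fin n), ((Equiv.Perm.sign σ : ℤ) : ℂ) * ∏ j, star (v (σ j) j) by
    rw [Finset.mul_sum]; exact Finset.sum_congr rfl fun σ _ => by ring]
  congr 1
  have : ∑ σ : Equiv.Perm (Fin n), ((Equiv.Perm.sign σ : ℤ) : ℂ) * ∏ j, star (v (σ j) j)
      = star (∑ σ : Equiv.Perm (Fin n), ((Equiv.Perm.sign σ : ℤ) : ℂ) * ∏ j, v (σ j) j) := by
    rw [star_sum]
    refine Finset.sum_congr rfl fun σ _ => ?_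
    rw [star_mul', star_prod]
    congr 1
    exact (star_intCast _).symm
  rw [this]
  congr 1
  have hdet : (Matrix.of fun r i => v i r).det
      = ∑ σ : Equiv.Perm (Fin n), ((Equiv.Perm.sign σ : ℤ) : ℂ) * ∏ j, v (σ j) j := by
    rw [← Matrix.det_transpose]
    rw [Matrix.det_apply']
    rfl
  rw [hdet]

open scoped MatrixOrder in
noncomputable def Matrix.PosSemidef.sqrt {A : Matrix (Fin n) (Fin n) ℂ} (_hA : A.PosSemidef) :
    Matrix (Fin n) (Fin n) ℂ :=
  CFC.sqrt A

open scoped MatrixOrder in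
lemma Matrix.PosSemidef.sqrt_mul_self {A : Matrix (Fin n) (Fin n) ℂ} (hA : A.PosSemidef) :
    hA.sqrt * hA.sqrt = A :=
  CFC.sqrt_mul_sqrt_self A hA.nonneg

open scoped MatrixOrder in
lemma Matrix.PosSemidef.posSemidef_sqrt {A : Matrix (Fin n) (Fin n) ℂ} (hA : A.PosSemidef) :
    hA.sqrt.PosSemidef :=
  (CFC.sqrt_nonneg A).posSemidef

lemma psd_decomp {A : Matrix (Fin n) (Fin n) ℂ} (hA : A.PosSemidef) :
    A = ∑ k : Fin n, vecMulVec (fun r => hA.sqrt r k) (star fun r => hA.sqrt r k) := by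
  conv_lhs => rw [← hA.sqrt_mul_self]
  ext r s
  rw [Matrix.mul_apply, Matrix.sum_apply]
  refine Finset.sum_congr rfl fun k _ => ?_
  simp only [Finset.sum_apply, vecMulVec_apply, Pi.star_apply]
  rw [← hA.posSemidef_sqrt.1.apply k s]  -- ?

open Submodule Module in
lemma rank_le_span_cols {ι : Type*} (I : Finset ι) (A : ι → Matrix (Fin n) (Fin n) ℂ)
    (hA : ∀ i, (A i).PosSemidef) :
    (∑ i ∈ I, A i).rank ≤
      finrank ℂ (⨆ i ∈ I, span ℂ (Set.range (fun k (r : Fin n) => (hA i).sqrt r k)) :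
        Submodule ℂ (Fin n → ℂ)) := by
  classical
  have hsum : ∀ y, (∑ i ∈ I, A i) *ᵥ y = ∑ i ∈ I, (A i) *ᵥ y := by
    intro y
    induction I using Finset.induction_on with
    | empty => simp [Matrix.zero_mulVec]
    | @insert a S ha ih =>
      rw [Finset.sum_insert ha, Finset.sum_insert ha, Matrix.add_mulVec, ih]
  have hle : LinearMap.range (∑ i ∈ I, A i).mulVecLin ≤
      ⨆ i ∈ I, span ℂ (Set.range (fun k (r : Fin n) => (hA i).sqrt r k)) := by
    rintro x ⟨y, rfl⟩
    rw [Matrix.mulVecLin_apply, hsum]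
    refine Submodule.sum_mem _ fun i hi => ?_
    have hmem : (A i) *ᵥ y ∈ span ℂ (Set.range (fun k (r : Fin n) => (hA i).sqrt r k)) := by
      have h1 : (A i) *ᵥ y = (hA i).sqrt *ᵥ ((hA i).sqrt *ᵥ y) := by
        rw [Matrix.mulVec_mulVec, (hA i).sqrt_mul_self]
      rw [h1]
      have h2 : (hA i).sqrt *ᵥ ((hA i).sqrt *ᵥ y) ∈ LinearMap.range (hA i).sqrt.mulVecLin :=
        ⟨(hA i).sqrt *ᵥ y, rfl⟩
      rw [Matrix.range_mulVecLin] at h2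
      exact h2
    exact (le_biSup (fun i => span ℂ (Set.range (fun k (r : Fin n) => (hA i).sqrt r k))) hi) hmem
  exact Submodule.finrank_mono hle


end Matrices

open Submodule Module

/-- Alexandrov–Panov positivity criterion: if positive semidefinite Hermitian
matrices `α₁, ..., αₙ` satisfy `rank (∑ i ∈ I, α i) ≥ |I|` for every `I ⊆ [n]`,
then the mixed discriminant `D(α₁,...,αₙ)` is positive. -/
theorem mixedDiscriminant_pos_of_rank_ge
    (n : ℕ) (α : Fin n → Matrix (Fin n) (Fin n) ℂ) (hα : ∀ i, (α i).PosSemidef)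
    (hr : ∀ I : Finset (Fin n), I.card ≤ (∑ i ∈ I, α i).rank) :
    0 < mixedDiscriminant n α := by
  classical
  set c : Fin n → Fin n → (Fin n → ℂ) := fun i k r => (hα i).sqrt r k with hc
  have hex : ∃ k : Fin n → Fin n, ∀ g : Fin n → ℂ,
      (∑ i, g i • c i (k i)) = 0 → ∀ i, g i = 0 := by
    rcases Nat.eq_zero_or_pos n with h0 | hpos
    · subst h0
      exact ⟨fun i => i.elim0, fun g _ i => i.elim0⟩
    · haveI : Nonempty (Fin n) := ⟨⟨0, hpos⟩⟩
      obtain ⟨k, hk⟩ := rado_aux c Finset.univ ⊥ (fun I _ => by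
        rw [finrank_bot ℂ (Fin n → ℂ), bot_sup_eq, add_zero]
        exact (hr I).trans (rank_le_span_cols I α hα))
      exact ⟨k, fun g hg i => hk g (by rw [hg]; exact Submodule.zero_mem ⊥) i (Finset.mem_univ i)⟩
  obtain ⟨k, hk⟩ := hex
  have hrep : ∀ i, α i = ∑ m : Fin n, vecMulVec (c i m) (star (c i m)) :=
    fun i => psd_decomp (hα i)
  have hexp : mixedDiscriminant n α
      = (n.factorial : ℂ)⁻¹ * ∑ f : Fin n → Fin n,
          ((Matrix.of fun r i => c i (f i) r).det * star (Matrix.of fun r i => c i (f i) r).det) := by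
    have h0 : mixedDiscriminant n α
        = (n.factorial : ℂ)⁻¹ * ∑ σ : Equiv.Perm (Fin n), detAux n σ α := rfl
    rw [h0]
    congr 1
    have h1 : ∀ σ : Equiv.Perm (Fin n), detAux n σ α
        = ∑ f : Fin n → Fin n, detAux n σ (fun i => vecMulVec (c i (f i)) (star (c i (f i)))) := by
      intro σ
      rw [show detAux n σ α = detAux n σ (fun i => ∑ m : Fin n, vecMulVec (c i m) (star (c i m)))
        by rw [← funext hrep]]
      exact (detAux n σ).map_sum (fun i m => vecMulVec (c i m) (star (c i m)))
    rw [Finset.sum_congr rfl fun σ _ => h1 σ, Finset.sum_comm]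
    exact Finset.sum_congr rfl fun f _ => sum_detAux_rankOne (fun i => c i (f i))
  rw [hexp]
  have hterm : ∀ f : Fin n → Fin n, (0:ℂ) ≤ (Matrix.of fun r i => c i (f i) r).det
      * star (Matrix.of fun r i => c i (f i) r).det := by
    intro f
    rw [← starRingEnd_apply, Complex.mul_conj]
    exact Complex.zero_le_real.2 (Complex.normSq_nonneg _)
  have hdetk : (Matrix.of fun r i => c i (k i) r).det ≠ 0 := by
    intro h
    obtain ⟨g, hg0, hgv⟩ := (Matrix.exists_mulVec_eq_zero_iff).2 h
    apply hg0
    funext i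
    refine hk g ?_ i
    funext r
    have := congrFun hgv r
    rw [Matrix.mulVec, dotProduct] at this
    simpa [Finset.sum_apply, mul_comm] using this
  have hkpos : (0:ℂ) < (Matrix.of fun r i => c i (k i) r).det
      * star (Matrix.of fun r i => c i (k i) r).det := by
    rw [← starRingEnd_apply, Complex.mul_conj]
    exact Complex.zero_lt_real.2 (Complex.normSq_pos.2 hdetk)
  have hsum : (0:ℂ) < ∑ f : Fin n → Fin n,
      ((Matrix.of fun r i => c i (f i) r).det * star (Matrix.of fun r i => c i (f i) r).det) :=
    Finset.sum_pos' (fun f _ => hterm f) ⟨k, Finset.mem_univ k, hkpos⟩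
  have hfac : (0:ℂ) < (n.factorial : ℂ)⁻¹ := by
    have h1 : ((n.factorial : ℝ) : ℂ) = (n.factorial : ℂ) := by norm_cast
    rw [← h1, ← Complex.ofReal_inv]
    refine Complex.zero_lt_real.2 ?_
    positivity
  exact mul_pos hfac hsum
end

section
/- Let α₁, ..., αₙ be positive semidefinite n×n Hermitian matrices. Then the mixed discriminant D(α₁,...,αₙ) > 0 if and only if for every subset I ⊆ [n], rank(∑_{i∈I} α_i) ≥ |I|. -/
open Matrix
open scoped ComplexOrder

namespace MixedDiscAux

open Submodule Module Set Equiv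

variable {n : ℕ}

noncomputable def Wspan (v : Fin n → Fin n → (Fin n → ℂ)) (I : Finset (Fin n))
    (K : Fin n → Finset (Fin n)) : Submodule ℂ (Fin n → ℂ) :=
  ⨆ i ∈ I, ⨆ k ∈ K i, ℂ ∙ v i k

lemma le_Wspan (v : Fin n → Fin n → (Fin n → ℂ)) {I : Finset (Fin n)}
    {K : Fin n → Finset (Fin n)} {i : Fin n} {k : Fin n} (hi : i ∈ I) (hk : k ∈ K i) :
    (ℂ ∙ v i k : Submodule ℂ (Fin n → ℂ)) ≤ Wspan v I K := by
  unfold Wspan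
  exact le_trans (le_biSup (fun k => (ℂ ∙ v i k : Submodule ℂ (Fin n → ℂ))) hk)
    (le_biSup (fun i => ⨆ k ∈ K i, (ℂ ∙ v i k : Submodule ℂ (Fin n → ℂ))) hi)

lemma Wspan_le (v : Fin n → Fin n → (Fin n → ℂ)) {I : Finset (Fin n)}
    {K : Fin n → Finset (Fin n)} {T : Submodule ℂ (Fin n → ℂ)}
    (h : ∀ i ∈ I, ∀ k ∈ K i, v i k ∈ T) : Wspan v I K ≤ T := by
  unfold Wspan
  exact iSup₂_le fun i hi => iSup₂_le fun k hk =>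
    (span_singleton_le_iff_mem _ _).2 (h i hi k hk)

lemma mem_Wspan (v : Fin n → Fin n → (Fin n → ℂ)) {I : Finset (Fin n)}
    {K : Fin n → Finset (Fin n)} {i : Fin n} {k : Fin n} (hi : i ∈ I) (hk : k ∈ K i) :
    v i k ∈ Wspan v I K :=
  le_Wspan v hi hk (mem_span_singleton_self _)

lemma Wspan_congr (v : Fin n → Fin n → (Fin n → ℂ)) {I : Finset (Fin n)}
    {K K' : Fin n → Finset (Fin n)} (h : ∀ i ∈ I, K i = K' i) :
    Wspan v I K = Wspan v I K' := by
  refine le_antisymm (Wspan_le v fun i hi k hk => mem_Wspan v hi (h i hi ▸ hk))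
    (Wspan_le v fun i hi k hk => mem_Wspan v hi ((h i hi).symm ▸ hk))

/-- Rado's theorem for the vector matroid on `ℂⁿ`. -/
lemma rado_aux (v : Fin n → Fin n → (Fin n → ℂ)) :
    ∀ (N : ℕ) (K : Fin n → Finset (Fin n)), (∑ i, (K i).card) ≤ N →
    (∀ I : Finset (Fin n), I.card ≤ finrank ℂ (Wspan v I K)) →
    ∃ c : Fin n → Fin n, (∀ i, c i ∈ K i) ∧ LinearIndependent ℂ (fun i => v i (c i)) := by
  intro N
  induction N with
  | zero =>
    intro K hN h
    -- all K i are empty; then n = 0 is forced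
    have hK : ∀ i, K i = ∅ := by
      intro i
      have : (K i).card = 0 := by
        have h2 : (K i).card ≤ ∑ j, (K j).card :=
          Finset.single_le_sum (f := fun i => (K i).card) (fun _ _ => Nat.zero_le _)
            (Finset.mem_univ i)
        omega
      exact Finset.card_eq_zero.mp this
    -- derive n = 0
    rcases Nat.eq_zero_or_pos n with h0 | h0
    · subst h0
      exact ⟨fun i => i.elim0, fun i => i.elim0, linearIndependent_empty_type⟩
    · exfalso
      set i : Fin n := ⟨0, h0⟩
      have h1 := h {i}
      have : Wspan v {i} K = ⊥ := by
        refine le_antisymm (Wspan_le v fun i' hi' k hk => ?_) bot_le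
        simp [hK i'] at hk
      rw [this] at h1
      simp at h1
  | succ N ih =>
    intro K hN h
    by_cases h1 : ∀ i, (K i).card ≤ 1
    · -- each `K i` is a singleton, and the transversal is independent
      have hsing : ∀ i, ∃ k, K i = {k} := by
        intro i
        refine Finset.card_eq_one.mp (le_antisymm (h1 i) ?_)
        by_contra hc
        push_neg at hc
        have hKi : K i = ∅ := Finset.card_eq_zero.mp (by omega)
        have h2 := h {i}
        have : Wspan v {i} K = ⊥ := by
          refine le_antisymm (Wspan_le v fun i' hi' k hk => ?_) bot_le
          simp only [Finset.mem_singleton] at hi'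
          subst hi'
          simp [hKi] at hk
        rw [this] at h2
        simp at h2
      choose c hc using hsing
      refine ⟨c, fun i => by simp [hc i], ?_⟩
      rw [linearIndependent_iff_card_le_finrank_span]
      have hspan : span ℂ (Set.range fun i => v i (c i)) = Wspan v Finset.univ K := by
        refine le_antisymm ?_ (Wspan_le v fun i hi k hk => ?_)
        · rw [span_le]
          rintro x ⟨i, rfl⟩
          exact mem_Wspan v (Finset.mem_univ i) (by simp [hc i])
        · rw [hc i, Finset.mem_singleton] at hk
          subst hk
          exact subset_span ⟨i, rfl⟩
      calc Fintype.card (Fin n) = (Finset.univ : Finset (Fin n)).card := by simp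
        _ ≤ finrank ℂ (Wspan v Finset.univ K) := h Finset.univ
        _ = (Set.range fun i => v i (c i)).finrank ℂ := by rw [Set.finrank, hspan]
    · push_neg at h1
      obtain ⟨i₀, hi₀⟩ := h1
      obtain ⟨x, hx, y, hy, hxy⟩ := Finset.one_lt_card.mp hi₀
      set Kx := Function.update K i₀ ((K i₀).erase x) with hKx
      set Ky := Function.update K i₀ ((K i₀).erase y) with hKy
      -- removing one of x, y preserves the Rado condition
      have key : (∀ I : Finset (Fin n), I.card ≤ finrank ℂ (Wspan v I Kx)) ∨
          (∀ I : Finset (Fin n), I.card ≤ finrank ℂ (Wspan v I Ky)) := by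
        by_contra hcon
        push_neg at hcon
        obtain ⟨⟨A, hA⟩, ⟨B, hB⟩⟩ := hcon
        have hi₀A : i₀ ∈ A := by
          by_contra hi₀A
          have : Wspan v A Kx = Wspan v A K := by
            refine Wspan_congr v fun i hi => ?_
            rw [hKx, Function.update_of_ne (by rintro rfl; exact hi₀A hi)]
          rw [this] at hA
          exact absurd (h A) (by omega)
        have hi₀B : i₀ ∈ B := by
          by_contra hi₀B
          have : Wspan v B Ky = Wspan v B K := by
            refine Wspan_congr v fun i hi => ?_
            rw [hKy, Function.update_of_ne (by rintro rfl; exact hi₀B hi)]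
          rw [this] at hB
          exact absurd (h B) (by omega)
        set P := Wspan v A Kx
        set Q := Wspan v B Ky
        have hsup : Wspan v (A ∪ B) K ≤ P ⊔ Q := by
          refine Wspan_le v fun i hi k hk => ?_
          rcases Finset.mem_union.mp hi with hiA | hiB
          · by_cases hik : i = i₀ ∧ k = x
            · obtain ⟨rfl, rfl⟩ := hik
              refine Submodule.mem_sup_right (mem_Wspan v hi₀B ?_)
              rw [hKy, Function.update_self]
              exact Finset.mem_erase.mpr ⟨hxy, hk⟩
            · refine Submodule.mem_sup_left (mem_Wspan v hiA ?_)
              rw [hKx]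
              by_cases hii : i = i₀
              · subst hii
                rw [Function.update_self]
                refine Finset.mem_erase.mpr ⟨fun hkx => hik ⟨rfl, hkx⟩, hk⟩
              · rwa [Function.update_of_ne hii]
          · by_cases hik : i = i₀ ∧ k = y
            · obtain ⟨rfl, rfl⟩ := hik
              refine Submodule.mem_sup_left (mem_Wspan v hi₀A ?_)
              rw [hKx, Function.update_self]
              exact Finset.mem_erase.mpr ⟨fun hyx => hxy hyx.symm, hk⟩
            · refine Submodule.mem_sup_right (mem_Wspan v hiB ?_)
              rw [hKy]
              by_cases hii : i = i₀
              · subst hii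
                rw [Function.update_self]
                refine Finset.mem_erase.mpr ⟨fun hky => hik ⟨rfl, hky⟩, hk⟩
              · rwa [Function.update_of_ne hii]
        have hinf : Wspan v ((A ∩ B).erase i₀) K ≤ P ⊓ Q := by
          refine Wspan_le v fun i hi k hk => ?_
          obtain ⟨hii₀, hiAB⟩ := Finset.mem_erase.mp hi
          refine Submodule.mem_inf.mpr ⟨mem_Wspan v (Finset.mem_inter.mp hiAB).1 ?_,
            mem_Wspan v (Finset.mem_inter.mp hiAB).2 ?_⟩
          · rwa [hKx, Function.update_of_ne hii₀]
          · rwa [hKy, Function.update_of_ne hii₀]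
        have e1 : finrank ℂ (P ⊔ Q : Submodule ℂ (Fin n → ℂ)) + finrank ℂ (P ⊓ Q : Submodule ℂ (Fin n → ℂ)) = finrank ℂ P + finrank ℂ Q :=
          Submodule.finrank_sup_add_finrank_inf_eq P Q
        have e2 : (A ∪ B).card ≤ finrank ℂ (P ⊔ Q : Submodule ℂ (Fin n → ℂ)) :=
          le_trans (h (A ∪ B)) (Submodule.finrank_mono hsup)
        have e3 : ((A ∩ B).erase i₀).card ≤ finrank ℂ (P ⊓ Q : Submodule ℂ (Fin n → ℂ)) :=
          le_trans (h _) (Submodule.finrank_mono hinf)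
        have e4 : (A ∪ B).card + (A ∩ B).card = A.card + B.card :=
          Finset.card_union_add_card_inter A B
        have e5 : ((A ∩ B).erase i₀).card = (A ∩ B).card - 1 :=
          Finset.card_erase_of_mem (Finset.mem_inter.mpr ⟨hi₀A, hi₀B⟩)
        have e6 : 1 ≤ (A ∩ B).card :=
          Finset.card_pos.mpr ⟨i₀, Finset.mem_inter.mpr ⟨hi₀A, hi₀B⟩⟩
        omega
      -- apply the inductive hypothesis with the smaller system
      have hxcard : ∀ (z : Fin n) (hz : z ∈ K i₀),
          ∑ i, ((Function.update K i₀ ((K i₀).erase z)) i).card ≤ N := by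
        intro z hz
        have hcongr : ∀ i, ((Function.update K i₀ ((K i₀).erase z)) i).card
            = Function.update (fun i => (K i).card) i₀ ((K i₀).erase z).card i := by
          intro i
          by_cases hii : i = i₀
          · subst hii; simp
          · simp [Function.update_of_ne hii]
        rw [Finset.sum_congr rfl (fun i _ => hcongr i),
          Finset.sum_update_of_mem (Finset.mem_univ i₀), Finset.card_erase_of_mem hz]
        have h3 : ∑ i ∈ Finset.univ \ {i₀}, (K i).card + (K i₀).card = ∑ i, (K i).card := by
          rw [Finset.sdiff_singleton_eq_erase]
          exact Finset.sum_erase_add Finset.univ (fun i => (K i).card) (Finset.mem_univ i₀)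
        omega
      rcases key with hgood | hgood
      · obtain ⟨c, hc1, hc2⟩ := ih Kx (hxcard x hx) hgood
        refine ⟨c, fun i => ?_, hc2⟩
        have := hc1 i
        by_cases hii : i = i₀
        · subst hii; rw [hKx, Function.update_self] at this
          exact Finset.erase_subset _ _ this
        · rwa [hKx, Function.update_of_ne hii] at this
      · obtain ⟨c, hc1, hc2⟩ := ih Ky (hxcard y hy) hgood
        refine ⟨c, fun i => ?_, hc2⟩
        have := hc1 i
        by_cases hii : i = i₀
        · subst hii; rw [hKy, Function.update_self] at this
          exact Finset.erase_subset _ _ this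
        · rwa [hKy, Function.update_of_ne hii] at this

lemma step1_det (v : Fin n → Fin n → Fin n → ℂ) (σ : Equiv.Perm (Fin n)) :
    (Matrix.of fun i j => ∑ k, v (σ j) k i * (starRingEnd ℂ) (v (σ j) k j)).det
      = ∑ m : Fin n → Fin n, (∏ j, (starRingEnd ℂ) (v (σ j) (m j) j)) *
          (Matrix.of fun i j : Fin n => v (σ j) (m j) i).det := by
  rw [Matrix.det_apply']
  simp only [Matrix.of_apply]
  calc ∑ τ : Equiv.Perm (Fin n), ((Equiv.Perm.sign τ : ℤ) : ℂ) *
        ∏ j, ∑ k, v (σ j) k (τ j) * (starRingEnd ℂ) (v (σ j) k j)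
      = ∑ τ : Equiv.Perm (Fin n), ∑ m : Fin n → Fin n, ((Equiv.Perm.sign τ : ℤ) : ℂ) *
          ∏ j, (v (σ j) (m j) (τ j) * (starRingEnd ℂ) (v (σ j) (m j) j)) := by
        refine Finset.sum_congr rfl fun τ _ => ?_
        rw [Finset.prod_univ_sum, Finset.mul_sum]
        rfl
    _ = ∑ m : Fin n → Fin n, (∏ j, (starRingEnd ℂ) (v (σ j) (m j) j)) *
          (Matrix.of fun i j : Fin n => v (σ j) (m j) i).det := by
        rw [Finset.sum_comm]
        refine Finset.sum_congr rfl fun m _ => ?_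
        rw [Matrix.det_apply', Finset.mul_sum]
        refine Finset.sum_congr rfl fun τ _ => ?_
        rw [Finset.prod_mul_distrib]
        simp only [Matrix.of_apply]
        ring

lemma sum_det_eq (v : Fin n → Fin n → Fin n → ℂ) :
    ∑ σ : Equiv.Perm (Fin n),
        (Matrix.of fun i j => ∑ k, v (σ j) k i * (starRingEnd ℂ) (v (σ j) k j)).det
      = ∑ c : Fin n → Fin n,
          (Matrix.of fun i j : Fin n => v j (c j) i).det *
            (starRingEnd ℂ) (Matrix.of fun i j : Fin n => v j (c j) i).det := by
  calc ∑ σ : Equiv.Perm (Fin n),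
        (Matrix.of fun i j => ∑ k, v (σ j) k i * (starRingEnd ℂ) (v (σ j) k j)).det
      = ∑ σ : Equiv.Perm (Fin n), ∑ c : Fin n → Fin n,
          (∏ j, (starRingEnd ℂ) (v j (c j) (σ.symm j))) *
            (((Equiv.Perm.sign σ : ℤ) : ℂ) * (Matrix.of fun i j : Fin n => v j (c j) i).det) := by
        refine Finset.sum_congr rfl fun σ _ => ?_
        rw [step1_det]
        rw [← Equiv.sum_comp (Equiv.arrowCongr σ.symm (Equiv.refl (Fin n)))
          (fun m => (∏ j, (starRingEnd ℂ) (v (σ j) (m j) j)) *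
            (Matrix.of fun i j : Fin n => v (σ j) (m j) i).det)]
        refine Finset.sum_congr rfl fun c _ => ?_
        have he : ((Equiv.arrowCongr σ.symm (Equiv.refl (Fin n))) c) = fun j => c (σ j) := by
          funext j
          simp [Equiv.arrowCongr]
        rw [he]
        congr 1
        · rw [← Equiv.prod_comp σ.symm (fun j => (starRingEnd ℂ) (v (σ j) (c (σ j)) j))]
          refine Finset.prod_congr rfl fun j _ => ?_
          simp
        · have hsub : (Matrix.of fun i j : Fin n => v (σ j) (c (σ j)) i)
              = (Matrix.of fun i j : Fin n => v j (c j) i).submatrix id σ := by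
            ext i j
            simp [Matrix.submatrix]
          rw [hsub, Matrix.det_permute']
    _ = ∑ c : Fin n → Fin n,
          (Matrix.of fun i j : Fin n => v j (c j) i).det *
            ∑ σ : Equiv.Perm (Fin n), ((Equiv.Perm.sign σ : ℤ) : ℂ) *
              ∏ j, (starRingEnd ℂ) (v j (c j) (σ.symm j)) := by
        rw [Finset.sum_comm]
        refine Finset.sum_congr rfl fun c _ => ?_
        rw [Finset.mul_sum]
        refine Finset.sum_congr rfl fun σ _ => ?_
        ring
    _ = ∑ c : Fin n → Fin n,
          (Matrix.of fun i j : Fin n => v j (c j) i).det *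
            (starRingEnd ℂ) (Matrix.of fun i j : Fin n => v j (c j) i).det := by
        refine Finset.sum_congr rfl fun c _ => ?_
        congr 1
        rw [Matrix.det_apply', map_sum]
        rw [← Equiv.sum_comp (Equiv.inv (Equiv.Perm (Fin n)))
          (fun σ : Equiv.Perm (Fin n) => (starRingEnd ℂ)
            (((Equiv.Perm.sign σ : ℤ) : ℂ) * ∏ i, (Matrix.of fun i j : Fin n => v j (c j) i) (σ i) i))]
        refine Finset.sum_congr rfl fun σ _ => ?_
        simp only [Equiv.inv_apply, _root_.map_mul, map_prod, map_intCast, Matrix.of_apply,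
          Equiv.Perm.sign_inv]
        rfl

lemma rank_eq_finrank_Wspan (B : Fin n → Matrix (Fin n) (Fin n) ℂ) (I : Finset (Fin n)) :
    (∑ i ∈ I, (B i)ᴴ * B i).rank
      = finrank ℂ (Wspan (fun i k => fun p => (starRingEnd ℂ) (B i k p)) I
          (fun _ => Finset.univ)) := by
  set v : Fin n → Fin n → (Fin n → ℂ) := fun i k => fun p => (starRingEnd ℂ) (B i k p) with hv
  set D : Matrix (Fin n × Fin n) (Fin n) ℂ :=
    Matrix.of fun ik p => if ik.1 ∈ I then B ik.1 ik.2 p else 0 with hD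
  have hDD : Dᴴ * D = ∑ i ∈ I, (B i)ᴴ * B i := by
    ext p q
    simp only [Matrix.mul_apply, Matrix.conjTranspose_apply, Matrix.sum_apply, hD,
      Matrix.of_apply]
    rw [Fintype.sum_prod_type]
    have h1 : ∀ i : Fin n, ∑ k, star (if i ∈ I then B i k p else 0) *
        (if i ∈ I then B i k q else 0) = if i ∈ I then ∑ k, star (B i k p) * B i k q else 0 := by
      intro i
      by_cases hi : i ∈ I <;> simp [hi]
    rw [Finset.sum_congr rfl fun i _ => h1 i, Finset.sum_ite_mem, Finset.univ_inter]
  rw [← hDD, Matrix.rank_conjTranspose_mul_self, ← Matrix.rank_conjTranspose D,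
    Matrix.rank_eq_finrank_span_cols]
  have hspan : span ℂ (Set.range (Dᴴ)ᵀ) = Wspan v I (fun _ => Finset.univ) := by
    refine le_antisymm ?_ (Wspan_le v fun i hi k _ => ?_)
    · rw [span_le]
      rintro x ⟨ik, rfl⟩
      by_cases hik : ik.1 ∈ I
      · have hx : (Dᴴ)ᵀ ik = v ik.1 ik.2 := by
          funext p
          simp [hD, hik, hv]
        rw [hx]
        exact mem_Wspan v hik (Finset.mem_univ _)
      · have hx : (Dᴴ)ᵀ ik = 0 := by
          funext p
          simp [hD, hik]
        rw [hx]
        exact Submodule.zero_mem _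
    · have hx : v i k = (Dᴴ)ᵀ (i, k) := by
        funext p
        simp [hD, hi, hv]
      rw [hx]
      exact subset_span ⟨(i, k), rfl⟩
  rw [show Dᴴ.col = (Dᴴ)ᵀ from rfl, hspan]

end MixedDiscAux

open MixedDiscAux Submodule Module

/-- For positive semidefinite Hermitian matrices `α₁, ..., αₙ`, the mixed
discriminant `D(α₁,...,αₙ)` is positive if and only if
`rank (∑_{i ∈ I} α i) ≥ |I|` for every subset `I ⊆ [n]`. -/
theorem mixedDiscriminant_pos_iff_rank_ge
    (n : ℕ) (α : Fin n → Matrix (Fin n) (Fin n) ℂ) (hα : ∀ i, (α i).PosSemidef) :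
    0 < mixedDiscriminant n α ↔ ∀ I : Finset (Fin n), I.card ≤ (∑ i ∈ I, α i).rank := by
  classical
  choose B hB using fun i => (by
    open scoped Matrix.Norms.L2Operator MatrixOrder in
    exact CStarAlgebra.nonneg_iff_eq_star_mul_self.mp (hα i).nonneg :
    ∃ B : Matrix (Fin n) (Fin n) ℂ, α i = Bᴴ * B)
  set v : Fin n → Fin n → (Fin n → ℂ) := fun i k p => (starRingEnd ℂ) (B i k p) with hv
  have hent : ∀ (i : Fin n) (p q : Fin n),
      α i p q = ∑ k, v i k p * (starRingEnd ℂ) (v i k q) := by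
    intro i p q
    rw [hB i]
    simp [Matrix.mul_apply, Matrix.conjTranspose_apply, hv]
  have hmd : mixedDiscriminant n α = (n.factorial : ℂ)⁻¹ *
      ∑ c : Fin n → Fin n, (Matrix.of fun i j : Fin n => v j (c j) i).det *
        (starRingEnd ℂ) (Matrix.of fun i j : Fin n => v j (c j) i).det := by
    rw [mixedDiscriminant, ← sum_det_eq v]
    congr 1
    refine Finset.sum_congr rfl fun σ _ => ?_
    congr 1
    ext i j
    exact hent (σ j) i j
  have hrank : ∀ I : Finset (Fin n),
      (∑ i ∈ I, α i).rank = finrank ℂ (Wspan v I (fun _ => Finset.univ)) := by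
    intro I
    have hs : (∑ i ∈ I, α i) = ∑ i ∈ I, (B i)ᴴ * B i := Finset.sum_congr rfl fun i _ => hB i
    rw [hs]
    exact rank_eq_finrank_Wspan B I
  have hpos : 0 < mixedDiscriminant n α ↔
      ∃ c : Fin n → Fin n, (Matrix.of fun i j : Fin n => v j (c j) i).det ≠ 0 := by
    rw [hmd]
    have h1 : ∑ c : Fin n → Fin n, (Matrix.of fun i j : Fin n => v j (c j) i).det *
        (starRingEnd ℂ) (Matrix.of fun i j : Fin n => v j (c j) i).det
        = ((∑ c : Fin n → Fin n,
            Complex.normSq (Matrix.of fun i j : Fin n => v j (c j) i).det : ℝ) : ℂ) := by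
      push_cast
      exact Finset.sum_congr rfl fun c _ => Complex.mul_conj _
    rw [h1]
    rw [show ((n.factorial : ℂ))⁻¹ * ((∑ c : Fin n → Fin n,
          Complex.normSq (Matrix.of fun i j : Fin n => v j (c j) i).det : ℝ) : ℂ)
        = (((n.factorial : ℝ)⁻¹ * ∑ c : Fin n → Fin n,
            Complex.normSq (Matrix.of fun i j : Fin n => v j (c j) i).det : ℝ) : ℂ) by
      push_cast; ring]
    rw [Complex.zero_lt_real]
    have hfac : (0:ℝ) < (n.factorial : ℝ)⁻¹ := by positivity
    rw [mul_pos_iff_of_pos_left hfac]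
    constructor
    · intro hlt
      by_contra hc
      push_neg at hc
      rw [Finset.sum_eq_zero (fun c _ => by rw [hc c, Complex.normSq_zero])] at hlt
      exact lt_irrefl _ hlt
    · rintro ⟨c, hc⟩
      exact Finset.sum_pos' (fun c _ => Complex.normSq_nonneg _)
        ⟨c, Finset.mem_univ c, Complex.normSq_pos.mpr hc⟩
  rw [hpos]
  simp only [hrank]
  constructor
  · rintro ⟨c, hc⟩ I
    have hunit : IsUnit (Matrix.of fun i j : Fin n => v j (c j) i) :=
      (Matrix.isUnit_iff_isUnit_det _).mpr (isUnit_iff_ne_zero.mpr hc)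
    have hli : LinearIndependent ℂ (fun j => v j (c j)) := by
      have h := Matrix.linearIndependent_cols_iff_isUnit.mpr hunit
      have he : (fun j => (Matrix.of fun i j : Fin n => v j (c j) i)ᵀ j)
          = fun j => v j (c j) := by
        funext j
        rfl
      exact h
    have hres : LinearIndependent ℂ (fun j : ↥I => v j (c j)) :=
      hli.comp _ Subtype.val_injective
    calc I.card = Fintype.card ↥I := (Fintype.card_coe I).symm
      _ = (Set.range fun j : ↥I => v (↑j) (c ↑j)).finrank ℂ :=
          linearIndependent_iff_card_eq_finrank_span.mp hres
      _ ≤ finrank ℂ (Wspan v I fun _ => Finset.univ) := by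
          refine Submodule.finrank_mono (span_le.mpr ?_)
          rintro x ⟨⟨j, hj⟩, rfl⟩
          exact mem_Wspan v hj (Finset.mem_univ _)
  · intro h
    obtain ⟨c, -, hli⟩ := rado_aux v (∑ i : Fin n, (Finset.univ : Finset (Fin n)).card)
      (fun _ => Finset.univ) le_rfl h
    refine ⟨c, ?_⟩
    have he : (fun j => (Matrix.of fun i j : Fin n => v j (c j) i)ᵀ j)
        = fun j => v j (c j) := by
      funext j
      rfl
    have hunit : IsUnit (Matrix.of fun i j : Fin n => v j (c j) i) :=
      Matrix.linearIndependent_cols_iff_isUnit.mp (by exact hli)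
    exact ((Matrix.isUnit_iff_isUnit_det _).mp hunit).ne_zero
end

section
/- For integers p, q ≥ 1 and k ≥ 1, with N = k+p+q−1, we have C(N, p)·C(N, q) > C(N, p+k)·C(N, q+k), where C denotes the binomial coefficient. -/
/-- For `p, q ≥ 1` and `k ≥ 1`, with `N = k + p + q - 1`, we have
`C(N, p) * C(N, q) > C(N, p + k) * C(N, q + k)`. -/
theorem choose_mul_choose_gt
    (p q k : ℕ) (hp : 1 ≤ p) (hq : 1 ≤ q) (hk : 1 ≤ k) :
    (k + p + q - 1).choose (p + k) * (k + p + q - 1).choose (q + k) <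
      (k + p + q - 1).choose p * (k + p + q - 1).choose q := by
  set N := k + p + q - 1 with hN
  have hpk : p + k ≤ N := by omega
  have hqk : q + k ≤ N := by omega
  have h1 : N.choose (p + k) = N.choose (q - 1) := by
    rw [← Nat.choose_symm hpk]; congr 1; omega
  have h2 : N.choose (q + k) = N.choose (p - 1) := by
    rw [← Nat.choose_symm hqk]; congr 1; omega
  rw [h1, h2]
  have e1 : N.choose p * p = N.choose (p - 1) * (k + q) := by
    have h := Nat.choose_succ_right_eq N (p - 1)
    have hp1 : p - 1 + 1 = p := by omega
    have hNp : N - (p - 1) = k + q := by omega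
    rw [hp1, hNp] at h
    exact h
  have e2 : N.choose q * q = N.choose (q - 1) * (k + p) := by
    have h := Nat.choose_succ_right_eq N (q - 1)
    have hq1 : q - 1 + 1 = q := by omega
    have hNq : N - (q - 1) = k + p := by omega
    rw [hq1, hNq] at h
    exact h
  have hBp : 0 < N.choose (p - 1) := Nat.choose_pos (by omega)
  have hBq : 0 < N.choose (q - 1) := Nat.choose_pos (by omega)
  have hpq : 0 < p * q := by positivity
  refine Nat.lt_of_mul_lt_mul_right (a := p * q) ?_
  have hkey : p * q < (k + q) * (k + p) := by nlinarith
  calc N.choose (q - 1) * N.choose (p - 1) * (p * q)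
      < N.choose (q - 1) * N.choose (p - 1) * ((k + q) * (k + p)) := by
        exact (Nat.mul_lt_mul_left (Nat.mul_pos hBq hBp)).mpr hkey
    _ = (N.choose (p - 1) * (k + q)) * (N.choose (q - 1) * (k + p)) := by ring
    _ = N.choose p * N.choose q * (p * q) := by rw [← e1, ← e2]; ring
end

section
/- Let r: 2^[m] → ℕ be a polymatroid rank function (normalized, monotone, submodular). Then the set P = { n ∈ ℕ^m : ∑_i n_i = r([m]) and ∑_{i∈I} n_i ≤ r(I) for all I ⊊ [m] } is nonempty. -/
/-- The submodular theorem: the base of a discrete polymatroid is nonempty.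
If `r : 2^[m] → ℕ` is normalized, monotone and submodular, then there is
`n ∈ ℕ^m` with `∑ i, n i = r [m]` and `∑_{i ∈ I} n i ≤ r I` for all `I ⊊ [m]`. -/
theorem polymatroid_base_nonempty
    (m : ℕ) (r : Finset (Fin m) → ℕ)
    (h0 : r ∅ = 0)
    (hmono : ∀ I J : Finset (Fin m), I ⊆ J → r I ≤ r J)
    (hsub : ∀ I J : Finset (Fin m), r (I ∪ J) + r (I ∩ J) ≤ r I + r J) :
    ∃ nvec : Fin m → ℕ, ∑ i, nvec i = r Finset.univ ∧
      ∀ I : Finset (Fin m), I ⊂ Finset.univ → ∑ i ∈ I, nvec i ≤ r I := by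
  classical
  set F : ℕ → Finset (Fin m) := fun k => Finset.univ.filter (fun i => (i : ℕ) < k) with hF
  have hF0 : F 0 = ∅ := by simp [hF]
  have hFm : F m = Finset.univ := by
    ext i; simp [hF, i.isLt]
  have hFins : ∀ i : Fin m, F ((i : ℕ) + 1) = insert i (F i) := by
    intro i
    ext j
    simp only [hF, Finset.mem_filter, Finset.mem_univ, true_and, Finset.mem_insert, Fin.ext_iff]
    omega
  set f : ℕ → ℕ := fun k => r (F k) with hf
  have hfmono : Monotone f := by
    intro a b hab
    apply hmono
    intro i hi
    simp only [hF, Finset.mem_filter, Finset.mem_univ, true_and] at hi ⊢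
    omega
  have key : ∀ I : Finset (Fin m), ∑ i ∈ I, (f ((i : ℕ) + 1) - f i) ≤ r I := by
    intro I
    induction I using Finset.induction_on_max with
    | empty => simp [h0]
    | insert a s ha ih =>
      have hanotin : a ∉ s := fun h => lt_irrefl a (ha a h)
      have hssub : s ⊆ F (a : ℕ) := by
        intro x hx
        simp only [hF, Finset.mem_filter, Finset.mem_univ, true_and]
        exact ha x hx
      have hsubm := hsub (F (a : ℕ)) (insert a s)
      have hU : F (a : ℕ) ∪ insert a s = F ((a : ℕ) + 1) := by
        rw [hFins a]
        ext x
        simp only [Finset.mem_union, Finset.mem_insert]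
        constructor
        · rintro (h | h | h)
          · exact Or.inr h
          · exact Or.inl h
          · exact Or.inr (hssub h)
        · rintro (h | h)
          · exact Or.inr (Or.inl h)
          · exact Or.inl h
      have hI : F (a : ℕ) ∩ insert a s = s := by
        ext x
        simp only [Finset.mem_inter, Finset.mem_insert, hF, Finset.mem_filter,
          Finset.mem_univ, true_and]
        constructor
        · rintro ⟨hx, (rfl | hx2)⟩
          · omega
          · exact hx2
        · intro hx
          exact ⟨ha x hx, Or.inr hx⟩
      rw [hU, hI] at hsubm
      have hle : f (a : ℕ) ≤ f ((a : ℕ) + 1) := hfmono (Nat.le_succ _)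
      rw [Finset.sum_insert hanotin]
      have e1 : f ((a : ℕ) + 1) = r (F ((a : ℕ) + 1)) := rfl
      have e2 : f (a : ℕ) = r (F (a : ℕ)) := rfl
      omega
  refine ⟨fun i => f ((i : ℕ) + 1) - f i, ?_, ?_⟩
  · rw [Fin.sum_univ_eq_sum_range (fun k => f (k + 1) - f k) m,
      Finset.sum_range_tsub hfmono]
    simp [hf, hF0, hFm, h0]
  · intro I _
    exact key I
end
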